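/- Let π : (X,T) → (Y,S) be an almost one-to-one factor map between topological dynamical systems (there is a dense Gδ set X₀ ⊆ X with π⁻¹(π(x)) = {x} for all x ∈ X₀). If (Y,S) is transitive, then (X,T) is transitive; if (Y,S) is minimal, then (X,T) is minimal and π is a proximal extension. -/

import Mathlib

open Set Filter TopologicalSpace

/-- The `n`-th iterate (n ∈ ℤ) of a homeomorphism. -/
def hIter {X : Type*} [TopologicalSpace X] (T : X ≃ₜ X) (n : ℤ) : X → X :=
  fun x => (T.toEquiv ^ n) x

/-- The full orbit {Tⁿ x : n ∈ ℤ} of a point. -/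
def orb {X : Type*} [TopologicalSpace X] (T : X ≃ₜ X) (x : X) : Set X :=
  Set.range fun n : ℤ => hIter T n x

/-- The orbit closure of a point. -/
def orbCl {X : Type*} [TopologicalSpace X] (T : X ≃ₜ X) (x : X) : Set X :=
  closure (orb T x)

/-- A system is minimal if it has no proper nonempty closed invariant subset. -/
def IsMinimalSys {X : Type*} [TopologicalSpace X] (T : X → X) : Prop :=
  ∀ A : Set X, IsClosed A → A.Nonempty → T '' A = A → A = Set.univ

/-- `J` is a joining of the subsystems `(K,T)` and `(L,S)`: a closed `T × S`-invariant
subset of `K ×ˢ L` projecting onto `K` and onto `L`. -/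
def IsJoiningOn {X Y : Type*} [TopologicalSpace X] [TopologicalSpace Y]
    (T : X → X) (S : Y → Y) (K : Set X) (L : Set Y) (J : Set (X × Y)) : Prop :=
  IsClosed J ∧ J ⊆ K ×ˢ L ∧ Prod.map T S '' J = J ∧
    Prod.fst '' J = K ∧ Prod.snd '' J = L

/-- The subsystems `(K,T)` and `(L,S)` are disjoint: their only joining is `K ×ˢ L`. -/
def DisjointOn {X Y : Type*} [TopologicalSpace X] [TopologicalSpace Y]
    (T : X → X) (S : Y → Y) (K : Set X) (L : Set Y) : Prop :=
  ∀ J : Set (X × Y), IsJoiningOn T S K L J → J = K ×ˢ L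

section Aux

variable {X Y : Type*} [TopologicalSpace X] [TopologicalSpace Y]

lemma hIter_zero (T : X ≃ₜ X) (x : X) : hIter T 0 x = x := by
  simp [hIter]

lemma hIter_add (T : X ≃ₜ X) (m n : ℤ) (x : X) :
    hIter T (m + n) x = hIter T m (hIter T n x) := by
  simp [hIter, zpow_add, Equiv.Perm.mul_apply]

lemma hIter_one (T : X ≃ₜ X) (x : X) : hIter T 1 x = T x := by
  simp [hIter]

lemma hIter_neg_one (T : X ≃ₜ X) (x : X) : hIter T (-1) x = T.symm x := by
  simp [hIter, zpow_neg, Equiv.Perm.inv_def]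

lemma hIter_succ (T : X ≃ₜ X) (n : ℤ) (x : X) :
    hIter T (n + 1) x = T (hIter T n x) := by
  rw [add_comm, hIter_add, hIter_one]

lemma hIter_pred (T : X ≃ₜ X) (n : ℤ) (x : X) :
    hIter T (n - 1) x = T.symm (hIter T n x) := by
  rw [sub_eq_neg_add, hIter_add, hIter_neg_one]

lemma hIter_continuous (T : X ≃ₜ X) (n : ℤ) : Continuous (hIter T n) := by
  induction n using Int.induction_on with
  | zero =>
    have : hIter T 0 = id := funext (hIter_zero T)
    rw [this]; exact continuous_id
  | succ i ih =>
    have : hIter T (i + 1) = T ∘ hIter T i := funext (hIter_succ T i)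
    rw [this]; exact T.continuous.comp ih
  | pred i ih =>
    have : hIter T (-i - 1) = T.symm ∘ hIter T (-i) := funext (hIter_pred T (-i))
    rw [this]; exact T.symm.continuous.comp ih

lemma hIter_comm (T : X ≃ₜ X) (S : Y ≃ₜ Y) (f : X → Y)
    (hf : ∀ x, f (T x) = S (f x)) (n : ℤ) (x : X) :
    f (hIter T n x) = hIter S n (f x) := by
  have hf' : ∀ x, f (T.symm x) = S.symm (f x) := by
    intro x
    apply S.injective
    rw [← hf, T.apply_symm_apply, S.apply_symm_apply]
  induction n using Int.induction_on with
  | zero => rw [hIter_zero, hIter_zero]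
  | succ i ih => rw [hIter_succ, hIter_succ, hf, ih]
  | pred i ih => rw [hIter_pred, hIter_pred, hf', ih]

lemma mem_orb (T : X ≃ₜ X) (n : ℤ) (x : X) : hIter T n x ∈ orb T x := ⟨n, rfl⟩

lemma orb_image (T : X ≃ₜ X) (x : X) : ⇑T '' orb T x = orb T x := by
  ext z
  constructor
  · rintro ⟨_, ⟨n, rfl⟩, rfl⟩
    exact ⟨n + 1, by show hIter T (n + 1) x = T (hIter T n x); exact hIter_succ T n x⟩
  · rintro ⟨n, rfl⟩
    refine ⟨hIter T (n - 1) x, ⟨n - 1, rfl⟩, ?_⟩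
    show T (hIter T (n - 1) x) = hIter T n x
    rw [← hIter_succ, sub_add_cancel]

lemma orbCl_image (T : X ≃ₜ X) (x : X) : ⇑T '' orbCl T x = orbCl T x := by
  rw [orbCl, Homeomorph.image_closure, orb_image]

end Aux

/-- Let π : (X,T) → (Y,S) be an almost one-to-one factor map. If (Y,S) is transitive
then so is (X,T); if (Y,S) is minimal then (X,T) is minimal and π is proximal. -/

theorem stmt_12 {X Y : Type*} [MetricSpace X] [CompactSpace X]
    [MetricSpace Y] [CompactSpace Y] (T : X ≃ₜ X) (S : Y ≃ₜ Y)
    (π : X → Y) (hπc : Continuous π) (hπs : Function.Surjective π)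
    (hπ : ∀ x, π (T x) = S (π x))
    (halmost : ∃ X₀ : Set X, IsGδ X₀ ∧ Dense X₀ ∧ ∀ x ∈ X₀, π ⁻¹' {π x} = {x}) :
    ((∃ y : Y, Dense (orb S y)) → ∃ x : X, Dense (orb T x)) ∧
    (IsMinimalSys (⇑S) →
      IsMinimalSys (⇑T) ∧
      ∀ x₁ x₂ : X, π x₁ = π x₂ →
        ∀ ε > (0 : ℝ), ∃ n : ℤ, dist (hIter T n x₁) (hIter T n x₂) < ε) := by
  obtain ⟨X₀, hGδ, hX₀d, hfib⟩ := halmost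
  -- equivariance for π
  have hcomm : ∀ (n : ℤ) (x : X), π (hIter T n x) = hIter S n (π x) :=
    hIter_comm T S π hπ
  -- the shrink lemma: almost one-to-one points have small preimage neighborhoods
  have shrink : ∀ x₀ ∈ X₀, ∀ U : Set X, IsOpen U → x₀ ∈ U →
      ∃ V : Set Y, IsOpen V ∧ π x₀ ∈ V ∧ π ⁻¹' V ⊆ U := by
    intro x₀ hx₀ U hU hx₀U
    refine ⟨(π '' Uᶜ)ᶜ, ?_, ?_, ?_⟩
    · exact ((hU.isClosed_compl.isCompact.image hπc).isClosed).isOpen_compl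
    · intro h
      obtain ⟨u, hu, huπ⟩ := h
      have : u ∈ π ⁻¹' {π x₀} := huπ
      rw [hfib x₀ hx₀, mem_singleton_iff] at this
      exact hu (this ▸ hx₀U)
    · intro x hx
      by_contra hxU
      exact hx ⟨x, hxU, rfl⟩
  constructor
  · -- transitivity
    rintro ⟨y, hy⟩
    have : Nonempty X := ⟨(hπs y).choose⟩
    have trans : ∀ U W : Set X, IsOpen U → U.Nonempty → IsOpen W → W.Nonempty →
        ∃ x ∈ W, ∃ n : ℤ, hIter T n x ∈ U := by
      intro U W hU hUne hW hWne
      obtain ⟨xu, hxuU, hxu0⟩ := hX₀d.inter_open_nonempty U hU hUne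
      obtain ⟨xw, hxwW, hxw0⟩ := hX₀d.inter_open_nonempty W hW hWne
      obtain ⟨Vu, hVuo, hVum, hVus⟩ := shrink xu hxu0 U hU hxuU
      obtain ⟨Vw, hVwo, hVwm, hVws⟩ := shrink xw hxw0 W hW hxwW
      obtain ⟨zu, hzuV, m, hm⟩ := hy.inter_open_nonempty Vu hVuo ⟨π xu, hVum⟩
      obtain ⟨zw, hzwV, k, hk⟩ := hy.inter_open_nonempty Vw hVwo ⟨π xw, hVwm⟩
      have hm' : hIter S m y = zu := hm
      have hk' : hIter S k y = zw := hk
      obtain ⟨x, hx⟩ := hπs (hIter S k y)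
      refine ⟨x, hVws (by rw [mem_preimage, hx, hk']; exact hzwV), m - k, ?_⟩
      apply hVus
      rw [mem_preimage, hcomm, hx, ← hIter_add, sub_add_cancel, hm']
      exact hzuV
    set B : Set (Set X) := {U ∈ countableBasis X | U.Nonempty} with hB
    have hBc : B.Countable := (countable_countableBasis X).mono (sep_subset _ _)
    have hGo : ∀ U ∈ B, IsOpen (⋃ n : ℤ, hIter T n ⁻¹' U) := by
      intro U hU
      exact isOpen_iUnion fun n =>
        ((isBasis_countableBasis X).isOpen hU.1).preimage (hIter_continuous T n)
    have hGd : ∀ U ∈ B, Dense (⋃ n : ℤ, hIter T n ⁻¹' U) := by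
      intro U hU
      rw [dense_iff_inter_open]
      intro W hW hWne
      obtain ⟨x, hxW, n, hn⟩ :=
        trans U W ((isBasis_countableBasis X).isOpen hU.1) hU.2 hW hWne
      exact ⟨x, hxW, mem_iUnion.2 ⟨n, hn⟩⟩
    have hD : Dense (⋂ U ∈ B, ⋃ n : ℤ, hIter T n ⁻¹' U) :=
      dense_biInter_of_isOpen hGo hBc hGd
    obtain ⟨x, hx⟩ := hD.nonempty
    refine ⟨x, ?_⟩
    rw [(isBasis_countableBasis X).dense_iff]
    intro o ho hone
    have hxo : x ∈ ⋃ n : ℤ, hIter T n ⁻¹' o := by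
      have := mem_iInter₂.1 hx o
      exact this ⟨ho, hone⟩
    obtain ⟨n, hn⟩ := mem_iUnion.1 hxo
    exact ⟨hIter T n x, hn, mem_orb T n x⟩
  · -- minimality and proximality
    intro hSmin
    have hmin : IsMinimalSys ⇑T := by
      intro A hAc hAne hAinv
      have hπA : IsClosed (π '' A) := (hAc.isCompact.image hπc).isClosed
      have hinv : ⇑S '' (π '' A) = π '' A := by
        calc ⇑S '' (π '' A) = (fun x => S (π x)) '' A := image_image _ _ _
          _ = (fun x => π (T x)) '' A := by simp only [← hπ]
          _ = π '' (⇑T '' A) := (image_image _ _ _).symm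
          _ = π '' A := by rw [hAinv]
      have hY : π '' A = univ := hSmin _ hπA (hAne.image π) hinv
      have hsub : X₀ ⊆ A := by
        intro x₀ hx₀
        have hmem : π x₀ ∈ π '' A := hY ▸ mem_univ _
        obtain ⟨a, haA, ha⟩ := hmem
        have : a ∈ π ⁻¹' {π x₀} := ha
        rw [hfib x₀ hx₀, mem_singleton_iff] at this
        exact this ▸ haA
      have hAd : Dense A := hX₀d.mono hsub
      rw [← hAc.closure_eq, hAd.closure_eq]
    refine ⟨hmin, ?_⟩
    intro x₁ x₂ heq ε hε
    set TT : (X × X) ≃ₜ (X × X) := T.prodCongr T with hTT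
    have hfstc : ∀ p : X × X, Prod.fst (TT p) = T p.1 := fun p => rfl
    have hsndc : ∀ p : X × X, Prod.snd (TT p) = T p.2 := fun p => rfl
    have hfst : ∀ (n : ℤ) (p : X × X), (hIter TT n p).1 = hIter T n p.1 :=
      hIter_comm TT T Prod.fst hfstc
    have hsnd : ∀ (n : ℤ) (p : X × X), (hIter TT n p).2 = hIter T n p.2 :=
      hIter_comm TT T Prod.snd hsndc
    set K := orbCl TT (x₁, x₂) with hK
    have hKC : K ⊆ {p : X × X | π p.1 = π p.2} := by
      apply closure_minimal ?_ (isClosed_eq (hπc.comp continuous_fst) (hπc.comp continuous_snd))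
      rintro _ ⟨n, rfl⟩
      show π (hIter TT n (x₁, x₂)).1 = π (hIter TT n (x₁, x₂)).2
      rw [hfst, hsnd, hcomm, hcomm, heq]
    have hKinv : ⇑TT '' K = K := orbCl_image TT (x₁, x₂)
    have hA : Prod.fst '' K = univ := by
      apply hmin
      · exact (isClosed_closure.isCompact.image continuous_fst).isClosed
      · exact ⟨x₁, (x₁, x₂), subset_closure ⟨0, by show hIter TT 0 (x₁, x₂) = (x₁, x₂); exact hIter_zero TT _⟩, rfl⟩
      · calc ⇑T '' (Prod.fst '' K) = (fun p => T p.1) '' K := image_image _ _ _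
          _ = (fun p => (TT p).1) '' K := by simp only [hfstc]
          _ = Prod.fst '' (⇑TT '' K) := (image_image _ _ _).symm
          _ = Prod.fst '' K := by rw [hKinv]
    have : Nonempty X := ⟨x₁⟩
    obtain ⟨x₀, hx₀⟩ := hX₀d.nonempty
    have hx₀A : x₀ ∈ Prod.fst '' K := hA ▸ mem_univ _
    obtain ⟨p, hpK, hp1⟩ := hx₀A
    have hp2 : p.2 = x₀ := by
      have hpc := hKC hpK
      have : p.2 ∈ π ⁻¹' {π x₀} := by
        rw [mem_preimage, mem_singleton_iff, ← hp1]
        exact hpc.symm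
      rw [hfib x₀ hx₀, mem_singleton_iff] at this
      exact this
    have hdiag : (x₀, x₀) ∈ K := by
      have hpe : p = (x₀, x₀) := Prod.ext hp1 hp2
      rwa [hpe] at hpK
    rw [hK, orbCl, Metric.mem_closure_iff] at hdiag
    obtain ⟨q, hqmem, hqd⟩ := hdiag (ε / 2) (half_pos hε)
    obtain ⟨n, hn⟩ := hqmem
    have hn' : hIter TT n (x₁, x₂) = q := hn
    rw [← hn'] at hqd
    refine ⟨n, ?_⟩
    rw [Prod.dist_eq] at hqd
    have h1 : dist x₀ (hIter TT n (x₁, x₂)).1 < ε / 2 :=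
      lt_of_le_of_lt (le_max_left _ _) hqd
    have h2 : dist x₀ (hIter TT n (x₁, x₂)).2 < ε / 2 :=
      lt_of_le_of_lt (le_max_right _ _) hqd
    rw [hfst] at h1
    rw [hsnd] at h2
    calc dist (hIter T n x₁) (hIter T n x₂)
        ≤ dist (hIter T n x₁) x₀ + dist x₀ (hIter T n x₂) := dist_triangle _ _ _
      _ < ε / 2 + ε / 2 := by rw [dist_comm] at h1; exact add_lt_add h1 h2
      _ = ε := add_halves ε
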